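/- Let φ: ℝ^m → ℝⁿ be a linear map, C ⊆ ℝ^m a closed convex cone containing no lines, and R a nonzero extremal ray of the convex cone φ(C). Then there exists an extremal ray R′ of C such that φ(R′) = R. -/

import Mathlib

open Set

section Aux
variable {E : Type*} [NormedAddCommGroup E] [NormedSpace ℝ E] [FiniteDimensional ℝ E]

private lemma sum_dite_pad {ι : Type*} [Fintype ι] {k N : ℕ} (hk : k ≤ N) (e : ι ≃ Fin k)
    {M : Type*} [AddCommMonoid M] (F : ι → M) :
    (∑ j : Fin N, if h : (j : ℕ) < k then F (e.symm ⟨j, h⟩) else 0) = ∑ i, F i := by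
  have h1 : (∑ j : Fin N, if h : (j : ℕ) < k then F (e.symm ⟨j, h⟩) else 0)
      = ∑ j ∈ Finset.univ.map (Fin.castLEEmb hk),
        (if h : (j : ℕ) < k then F (e.symm ⟨j, h⟩) else 0) := by
    refine (Finset.sum_subset (Finset.subset_univ _) fun j _ hj => dif_neg fun h => ?_).symm
    exact hj (Finset.mem_map.mpr ⟨⟨(j : ℕ), h⟩, Finset.mem_univ _, by
      simp [Fin.castLEEmb, Fin.ext_iff]⟩)
  rw [h1, Finset.sum_map]
  have h2 : ∀ i : Fin k,
      (if h : ((Fin.castLEEmb hk i : Fin N) : ℕ) < k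
        then F (e.symm ⟨((Fin.castLEEmb hk i : Fin N) : ℕ), h⟩) else 0) = F (e.symm i) := by
    intro i
    rw [dif_pos (by simpa using i.isLt)]
    congr

  rw [Finset.sum_congr rfl fun i _ => h2 i]
  exact Equiv.sum_comp e.symm F

theorem myIsCompact_convexHull {S : Set E} (hS : IsCompact S) :
    IsCompact (convexHull ℝ S) := by
  rcases S.eq_empty_or_nonempty with rfl | ⟨s₀, hs₀⟩
  · simp
  set N := Module.finrank ℝ E + 1 with hN
  set g : (Fin N → ℝ) × (Fin N → E) → E := fun p => ∑ i, p.1 i • p.2 i with hg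
  have hgc : Continuous g := by
    apply continuous_finset_sum
    intro i _
    exact ((continuous_apply i).comp continuous_fst).smul
      ((continuous_apply i).comp continuous_snd)
  set T : Set ((Fin N → ℝ) × (Fin N → E)) := (stdSimplex ℝ (Fin N)) ×ˢ (Set.univ.pi fun _ => S)
    with hT
  have hTc : IsCompact T := (isCompact_stdSimplex (𝕜 := ℝ) (ι := Fin N)).prod (isCompact_univ_pi fun _ => hS)
  have : convexHull ℝ S = g '' T := by
    apply Subset.antisymm
    · intro x hx
      obtain ⟨ι, hfin, z, wgt, hzS, hai, hwpos, hwsum, hrep⟩ :=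
        eq_pos_convex_span_of_mem_convexHull hx
      letI := hfin
      have hne : Nonempty ι := by
        rcases isEmpty_or_nonempty ι with h | h
        · rw [Finset.univ_eq_empty, Finset.sum_empty] at hwsum; norm_num at hwsum
        · exact h
      have hk : Fintype.card ι ≤ N := by
        have h1 := hai.finrank_vectorSpan_add_one
        have h2 := Submodule.finrank_le (vectorSpan ℝ (Set.range z))
        omega
      set k := Fintype.card ι with hkdef
      let e : ι ≃ Fin k := Fintype.equivFin ι
      refine ⟨(fun j => if h : (j : ℕ) < k then wgt (e.symm ⟨j, h⟩) else 0,
               fun j => if h : (j : ℕ) < k then z (e.symm ⟨j, h⟩) else s₀), ⟨?_, ?_⟩, ?_⟩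
      · constructor
        · intro j
          dsimp only
          split
          · exact (hwpos _).le
          · exact le_rfl
        · rw [sum_dite_pad hk e wgt]; exact hwsum
      · intro j _
        dsimp only
        split
        · exact hzS ⟨_, rfl⟩
        · exact hs₀
      · show (∑ j : Fin N, _) = x
        rw [← hrep, ← sum_dite_pad hk e (fun i => wgt i • z i)]
        refine Finset.sum_congr rfl fun j _ => ?_
        by_cases hj : (j : ℕ) < k <;> simp [hj]
    · rintro x ⟨⟨wgt, z⟩, ⟨hw, hz⟩, rfl⟩
      exact (convex_convexHull ℝ S).sum_mem (fun i _ => hw.1 i) hw.2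
        (fun i _ => subset_convexHull ℝ S (hz i (mem_univ i)))
  rw [this]
  exact hTc.image hgc

theorem exists_pos_functional {D : Set E} (hcl : IsClosed D) (h0 : (0 : E) ∈ D)
    (hadd : ∀ x ∈ D, ∀ y ∈ D, x + y ∈ D)
    (hsmul : ∀ c : ℝ, 0 ≤ c → ∀ x ∈ D, c • x ∈ D)
    (hpt : ∀ x ∈ D, -x ∈ D → x = 0) :
    ∃ f : E →L[ℝ] ℝ, ∀ x ∈ D, x ≠ 0 → 0 < f x := by
  set S : Set E := D ∩ Metric.sphere 0 1 with hSdef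
  have hScomp : IsCompact S := (isCompact_sphere (0 : E) 1).inter_left hcl
  have hTcomp : IsCompact (convexHull ℝ S) := myIsCompact_convexHull hScomp
  have h0T : (0 : E) ∉ convexHull ℝ S := by
    intro h0T
    obtain ⟨ι, hfin, z, wgt, hzS, hai, hwpos, hwsum, hrep⟩ :=
      eq_pos_convex_span_of_mem_convexHull h0T
    letI := hfin
    have hne : Nonempty ι := by
      rcases isEmpty_or_nonempty ι with h | h
      · rw [Finset.univ_eq_empty, Finset.sum_empty] at hwsum; norm_num at hwsum
      · exact h
    obtain ⟨i₀⟩ := hne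
    classical
    have hsum : ∀ t : Finset ι, (∑ i ∈ t, wgt i • z i) ∈ D := by
      intro t
      induction t using Finset.induction with
      | empty => simpa using h0
      | insert _ _ hnm ih =>
        rw [Finset.sum_insert hnm]
        exact hadd _ (hsmul _ (hwpos _).le _ (hzS ⟨_, rfl⟩).1) _ ih
    have hx : wgt i₀ • z i₀ ∈ D := hsmul _ (hwpos i₀).le _ (hzS ⟨_, rfl⟩).1
    have hneg : -(wgt i₀ • z i₀) = ∑ i ∈ Finset.univ.erase i₀, wgt i • z i := by
      have h := hrep
      rw [← Finset.add_sum_erase _ _ (Finset.mem_univ i₀)] at h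
      exact neg_eq_of_add_eq_zero_right h
    have hzero : wgt i₀ • z i₀ = 0 := hpt _ hx (by rw [hneg]; exact hsum _)
    have hz0 : z i₀ = 0 := by
      rcases smul_eq_zero.mp hzero with h | h
      · exact absurd h (hwpos i₀).ne'
      · exact h
    have hn1 : ‖z i₀‖ = 1 := by
      have := (hzS ⟨i₀, rfl⟩).2
      rwa [mem_sphere_zero_iff_norm] at this
    rw [hz0, norm_zero] at hn1
    norm_num at hn1
  obtain ⟨f, u, hfu, hub⟩ :=
    geometric_hahn_banach_point_closed (convex_convexHull ℝ S) hTcomp.isClosed h0T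
  refine ⟨f, fun x hx hx0 => ?_⟩
  have hnx : (0 : ℝ) < ‖x‖ := norm_pos_iff.mpr hx0
  have hxS : ‖x‖⁻¹ • x ∈ S := by
    refine ⟨hsmul _ (inv_nonneg.mpr hnx.le) _ hx, ?_⟩
    rw [mem_sphere_zero_iff_norm, norm_smul, norm_inv, norm_norm]
    field_simp
  have h1 : u < f (‖x‖⁻¹ • x) := hub _ (subset_convexHull ℝ S hxS)
  have h2 : (0 : ℝ) < u := by simpa using hfu
  have h3 : f (‖x‖⁻¹ • x) = ‖x‖⁻¹ * f x := by rw [map_smul]; simp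
  rw [h3] at h1
  have : 0 < ‖x‖⁻¹ * f x := h2.trans h1
  nlinarith [inv_pos.mpr hnx]


end Aux

/-- The ray `ℝ_{≥0} · v` spanned by a vector `v`. -/
def rayOf {E : Type*} [SMul ℝ E] (v : E) : Set E := {x | ∃ t : ℝ, 0 ≤ t ∧ x = t • v}


lemma isClosed_rayOf {n : ℕ} {w : Fin n → ℝ} (hw : w ≠ 0) : IsClosed (rayOf w) := by
  obtain ⟨i, hi⟩ : ∃ i, w i ≠ 0 := by
    by_contra h
    push_neg at h
    exact hw (funext h)
  have heq : rayOf w = ((Submodule.span ℝ {w} : Submodule ℝ (Fin n → ℝ)) : Set (Fin n → ℝ))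
      ∩ {x | 0 ≤ x i * w i} := by
    ext x
    constructor
    · rintro ⟨t, ht, rfl⟩
      refine ⟨Submodule.smul_mem _ t (Submodule.mem_span_singleton_self w), ?_⟩
      have : (t • w) i = t * w i := rfl
      simp only [mem_setOf_eq, this]
      nlinarith [sq_nonneg (w i)]
    · rintro ⟨hsp, hpos⟩
      obtain ⟨a, rfl⟩ := Submodule.mem_span_singleton.mp hsp
      have h1 : (a • w) i = a * w i := rfl
      rw [mem_setOf_eq, h1] at hpos
      have ha : 0 ≤ a := by nlinarith [sq_nonneg (w i), (hi.lt_or_gt.elim (fun h => mul_pos_of_neg_of_neg h h) (fun h => mul_pos h h) : 0 < w i * w i)]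
      exact ⟨a, ha, rfl⟩
  rw [heq]
  exact (Submodule.closed_of_finiteDimensional _).inter
    (isClosed_le continuous_const ((continuous_apply i).mul continuous_const))


/-- Let φ : ℝ^m → ℝⁿ be a linear map, C ⊆ ℝ^m a closed convex cone containing no lines,
and R = ℝ_{≥0}·w a nonzero extremal ray of the image cone φ(C). Then there exists an
extremal ray R′ of C with φ(R′) = R. -/
theorem stmt_6 (m n : ℕ) (φ : (Fin m → ℝ) →ₗ[ℝ] (Fin n → ℝ))
    (C : ConvexCone ℝ (Fin m → ℝ))
    (hclosed : IsClosed (C : Set (Fin m → ℝ)))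
    (h0 : (0 : Fin m → ℝ) ∈ C)
    (hnoline : ∀ x, x ∈ C → -x ∈ C → x = 0)
    (w : Fin n → ℝ) (hw : w ≠ 0) (hwim : w ∈ φ '' (C : Set (Fin m → ℝ)))
    (hext : ∀ x y, x ∈ φ '' (C : Set (Fin m → ℝ)) → y ∈ φ '' (C : Set (Fin m → ℝ)) →
      x + y ∈ rayOf w → x ∈ rayOf w ∧ y ∈ rayOf w) :
    ∃ v : Fin m → ℝ, v ≠ 0 ∧ v ∈ C ∧
      (∀ x y, x ∈ C → y ∈ C → x + y ∈ rayOf v → x ∈ rayOf v ∧ y ∈ rayOf v) ∧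
      φ '' rayOf v = rayOf w := by
  classical
  obtain ⟨u, huC, huw⟩ := hwim
  set D : Set (Fin m → ℝ) := (C : Set (Fin m → ℝ)) ∩ φ ⁻¹' (rayOf w) with hDdef
  have hwray : w ∈ rayOf w := ⟨1, zero_le_one, (one_smul _ _).symm⟩
  have h0ray : (0 : Fin n → ℝ) ∈ rayOf w := ⟨0, le_rfl, (zero_smul _ _).symm⟩
  have hraysmul : ∀ c : ℝ, 0 ≤ c → ∀ a ∈ rayOf w, c • a ∈ rayOf w := by
    rintro c hc a ⟨t, ht, rfl⟩
    exact ⟨c * t, mul_nonneg hc ht, (smul_smul c t w).symm ▸ rfl⟩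
  have hφcont : Continuous φ := φ.continuous_of_finiteDimensional
  have hDcl : IsClosed D := hclosed.inter ((isClosed_rayOf hw).preimage hφcont)
  have h0D : (0 : Fin m → ℝ) ∈ D := ⟨h0, by simp only [mem_preimage, map_zero]; exact h0ray⟩
  have hDadd : ∀ x ∈ D, ∀ y ∈ D, x + y ∈ D := by
    rintro x ⟨hxC, hxr⟩ y ⟨hyC, hyr⟩
    refine ⟨C.add_mem hxC hyC, ?_⟩
    rw [mem_preimage, map_add]
    obtain ⟨s, hs, hes⟩ := hxr
    obtain ⟨t, ht, het⟩ := hyr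
    exact ⟨s + t, by positivity, by rw [hes, het, add_smul]⟩
  have hDsmul : ∀ c : ℝ, 0 ≤ c → ∀ x ∈ D, c • x ∈ D := by
    rintro c hc x ⟨hxC, hxr⟩
    rcases hc.eq_or_lt with rfl | hc
    · rw [zero_smul]; exact h0D
    · exact ⟨C.smul_mem hc hxC, by rw [mem_preimage, map_smul]; exact hraysmul c hc.le _ hxr⟩
  have hDpt : ∀ x ∈ D, -x ∈ D → x = 0 := fun x hx hnx => hnoline x hx.1 hnx.1
  obtain ⟨f, hf⟩ := exists_pos_functional hDcl h0D hDadd hDsmul hDpt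
  have huD : u ∈ D := ⟨huC, by rw [mem_preimage, huw]; exact hwray⟩
  have hu0 : u ≠ 0 := by rintro rfl; rw [map_zero] at huw; exact hw huw.symm
  have hfu : 0 < f u := hf u huD hu0
  -- a compact base for D
  set S : Set (Fin m → ℝ) := D ∩ Metric.sphere 0 1 with hSdef
  have hScomp : IsCompact S := (isCompact_sphere _ _).inter_left hDcl
  have hSne : S.Nonempty := by
    refine ⟨‖u‖⁻¹ • u, hDsmul _ (by positivity) _ huD, ?_⟩
    rw [mem_sphere_zero_iff_norm, norm_smul, norm_inv, norm_norm]
    rw [inv_mul_cancel₀ (norm_ne_zero_iff.mpr hu0)]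
  obtain ⟨x₀, hx₀S, hx₀min⟩ := hScomp.exists_isMinOn hSne f.continuous.continuousOn
  have hc : 0 < f x₀ := by
    refine hf _ hx₀S.1 ?_
    intro h
    have h2 := hx₀S.2
    rw [h, mem_sphere_zero_iff_norm, norm_zero] at h2
    norm_num at h2
  have hbound : ∀ x ∈ D, f x₀ * ‖x‖ ≤ f x := by
    intro x hx
    rcases eq_or_ne x 0 with rfl | hx0
    · simp
    · have hn : (0 : ℝ) < ‖x‖ := norm_pos_iff.mpr hx0
      have h1 : ‖x‖⁻¹ • x ∈ S := by
        refine ⟨hDsmul _ (by positivity) _ hx, ?_⟩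
        rw [mem_sphere_zero_iff_norm, norm_smul, norm_inv, norm_norm]
        field_simp
      have h2' : f x₀ ≤ f (‖x‖⁻¹ • x) := hx₀min h1
      rw [map_smul, smul_eq_mul] at h2'
      calc f x₀ * ‖x‖ ≤ (‖x‖⁻¹ * f x) * ‖x‖ := by nlinarith
        _ = f x := by field_simp
  set B : Set (Fin m → ℝ) := {x | x ∈ D ∧ f x = 1} with hBdef
  have hBcl : IsClosed B := by
    have : B = D ∩ f ⁻¹' {1} := by ext x; simp [hBdef, mem_preimage]
    rw [this]
    exact hDcl.inter (isClosed_singleton.preimage f.continuous)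
  have hBsub : B ⊆ Metric.closedBall 0 (f x₀)⁻¹ := by
    intro x hx
    rw [Metric.mem_closedBall, dist_zero_right]
    have h1 := hbound x hx.1
    rw [hx.2] at h1
    calc ‖x‖ = (f x₀)⁻¹ * (f x₀ * ‖x‖) := by field_simp
      _ ≤ (f x₀)⁻¹ * 1 := by
          apply mul_le_mul_of_nonneg_left h1 (by positivity)
      _ = (f x₀)⁻¹ := mul_one _
  have hBcomp : IsCompact B := (isCompact_closedBall _ _).of_isClosed_subset hBcl hBsub
  have hBconv : Convex ℝ B := by
    intro x hx y hy a b ha hb hab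
    refine ⟨hDadd _ (hDsmul a ha _ hx.1) _ (hDsmul b hb _ hy.1), ?_⟩
    rw [map_add, map_smul, map_smul, smul_eq_mul, smul_eq_mul, hx.2, hy.2, mul_one, mul_one, hab]
  have hu'B : (f u)⁻¹ • u ∈ B := by
    refine ⟨hDsmul _ (by positivity) _ huD, ?_⟩
    rw [map_smul, smul_eq_mul]
    field_simp
  have hKM := closure_convexHull_extremePoints hBcomp hBconv
  have hexb : ∃ b ∈ B.extremePoints ℝ, φ b ≠ 0 := by
    by_contra hcon
    push_neg at hcon
    have hsub : B.extremePoints ℝ ⊆ ((LinearMap.ker φ : Submodule ℝ (Fin m → ℝ)) : Set (Fin m → ℝ)) :=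
      fun b hb => LinearMap.mem_ker.mpr (hcon b hb)
    have h1 : closure (convexHull ℝ (B.extremePoints ℝ))
        ⊆ ((LinearMap.ker φ : Submodule ℝ (Fin m → ℝ)) : Set (Fin m → ℝ)) :=
      closure_minimal (convexHull_min hsub (LinearMap.ker φ).convex)
        (Submodule.closed_of_finiteDimensional _)
    rw [hKM] at h1
    have h2 : φ ((f u)⁻¹ • u) = 0 := LinearMap.mem_ker.mp (h1 hu'B)
    rw [map_smul, huw] at h2
    have : w = 0 := by
      have h3 := congrArg (fun z => (f u : ℝ) • z) h2
      simpa [smul_smul, mul_inv_cancel₀ hfu.ne'] using h3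
    exact hw this
  obtain ⟨b, hbext, hbφ⟩ := hexb
  have hbB : b ∈ B := extremePoints_subset hbext
  obtain ⟨s, hs, hbφeq⟩ := hbB.1.2
  have hspos : 0 < s := by
    rcases hs.eq_or_lt with rfl | h
    · rw [zero_smul] at hbφeq; exact absurd hbφeq hbφ
    · exact h
  have hfb : f b = 1 := hbB.2
  -- the key extremality claim inside D
  have hkey : ∀ x y, x ∈ D → y ∈ D → x + y ∈ rayOf b → x ∈ rayOf b ∧ y ∈ rayOf b := by
    rintro x y hx hy ⟨t, ht, hxy⟩
    rcases ht.eq_or_lt with rfl | htpos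
    · rw [zero_smul] at hxy
      have hxz : x = 0 := hDpt x hx (by
        have : -x = y := neg_eq_of_add_eq_zero_left (by rw [add_comm]; exact hxy)
        rw [this]; exact hy)
      have hyz : y = 0 := by rw [hxz, zero_add] at hxy; exact hxy
      exact ⟨⟨0, le_rfl, by rw [hxz, zero_smul]⟩, ⟨0, le_rfl, by rw [hyz, zero_smul]⟩⟩
    · by_cases hx0 : x = 0
      · subst hx0
        rw [zero_add] at hxy
        exact ⟨⟨0, le_rfl, (zero_smul _ _).symm⟩, ⟨t, ht, hxy⟩⟩
      · by_cases hy0 : y = 0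
        · subst hy0
          rw [add_zero] at hxy
          exact ⟨⟨t, ht, hxy⟩, ⟨0, le_rfl, (zero_smul _ _).symm⟩⟩
        · have hfx : 0 < f x := hf x hx hx0
          have hfy : 0 < f y := hf y hy hy0
          have hsum : f x + f y = t := by
            have h1 := congrArg f hxy
            rw [map_add, map_smul, smul_eq_mul, hfb, mul_one] at h1
            exact h1
          have hxB : (f x)⁻¹ • x ∈ B := by
            refine ⟨hDsmul _ (by positivity) _ hx, ?_⟩
            rw [map_smul, smul_eq_mul]; field_simp
          have hyB : (f y)⁻¹ • y ∈ B := by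
            refine ⟨hDsmul _ (by positivity) _ hy, ?_⟩
            rw [map_smul, smul_eq_mul]; field_simp
          have hseg : b ∈ openSegment ℝ ((f x)⁻¹ • x) ((f y)⁻¹ • y) := by
            refine ⟨f x / t, f y / t, by positivity, by positivity, ?_, ?_⟩
            · rw [← add_div, hsum, div_self htpos.ne']
            · rw [smul_smul, smul_smul]
              have e1 : f x / t * (f x)⁻¹ = t⁻¹ := by field_simp
              have e2 : f y / t * (f y)⁻¹ = t⁻¹ := by field_simp
              rw [e1, e2, ← smul_add, hxy, smul_smul, inv_mul_cancel₀ htpos.ne', one_smul]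
          obtain ⟨h1, h2⟩ := (mem_extremePoints.mp hbext).2 _ hxB _ hyB hseg
          constructor
          · refine ⟨f x, hfx.le, ?_⟩
            rw [← h1, smul_smul, mul_inv_cancel₀ hfx.ne', one_smul]
          · refine ⟨f y, hfy.le, ?_⟩
            rw [← h2, smul_smul, mul_inv_cancel₀ hfy.ne', one_smul]
  -- assemble
  have hφv : φ (s⁻¹ • b) = w := by
    rw [map_smul, hbφeq, smul_smul, inv_mul_cancel₀ hspos.ne', one_smul]
  have hrayvb : rayOf (s⁻¹ • b) = rayOf b := by
    ext z
    constructor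
    · rintro ⟨t, ht, rfl⟩
      exact ⟨t * s⁻¹, by positivity, by rw [smul_smul]⟩
    · rintro ⟨t, ht, rfl⟩
      refine ⟨t * s, by positivity, ?_⟩
      rw [smul_smul, mul_assoc, mul_inv_cancel₀ hspos.ne', mul_one]
  refine ⟨s⁻¹ • b, ?_, C.smul_mem (inv_pos.mpr hspos) hbB.1.1, ?_, ?_⟩
  · intro h
    apply hw
    rw [← hφv, h, map_zero]
  · intro x y hx hy hxy
    have h1 : φ x + φ y ∈ rayOf w := by
      obtain ⟨t, ht, he⟩ := hxy
      rw [← map_add, he, map_smul, hφv]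
      exact ⟨t, ht, rfl⟩
    obtain ⟨hfx, hfy⟩ := hext (φ x) (φ y) ⟨x, hx, rfl⟩ ⟨y, hy, rfl⟩ h1
    rw [hrayvb] at hxy ⊢
    exact hkey x y ⟨hx, hfx⟩ ⟨hy, hfy⟩ hxy
  · ext z
    constructor
    · rintro ⟨x, ⟨t, ht, rfl⟩, rfl⟩
      rw [map_smul, hφv]
      exact ⟨t, ht, rfl⟩
    · rintro ⟨t, ht, rfl⟩
      exact ⟨t • (s⁻¹ • b), ⟨t, ht, rfl⟩, by rw [map_smul, hφv]⟩
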